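/- Let ν_d be Lebesgue measure on ℝ^d restricted to the closed unit ball B^d. Then ν_d(B(e_1, √5/2)) ≤ (16/(3(d+1))) (√55/8)^{d+1} λ^{d-1}(B^{d-1}). -/

import Mathlib

open MeasureTheory Metric intervalIntegral
open scoped ENNReal


lemma ftc_aux (k : ℕ) (s R a b : ℝ) (hab : a ≤ b)
    (hpos : ∀ t ∈ Set.Ioo a b, 0 < R - (t - s) ^ 2) :
    ∫ t in a..b, (t - s) * Real.sqrt (R - (t - s) ^ 2) ^ (k + 1) =
      (Real.sqrt (R - (a - s) ^ 2) ^ (k + 3) - Real.sqrt (R - (b - s) ^ 2) ^ (k + 3)) / (k + 3) := by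
  set F : ℝ → ℝ := fun t => -(Real.sqrt (R - (t - s) ^ 2) ^ (k + 3) / (k + 3)) with hF
  have hcont : Continuous fun t : ℝ => (t - s) * Real.sqrt (R - (t - s) ^ 2) ^ (k + 1) := by
    have h1 : Continuous fun t : ℝ => R - (t - s) ^ 2 :=
      continuous_const.sub ((continuous_id.sub continuous_const).pow 2)
    exact (continuous_id.sub continuous_const).mul
      ((Real.continuous_sqrt.comp h1).pow (k + 1))
  have hderiv : ∀ t ∈ Set.Ioo a b,
      HasDerivAt F ((t - s) * Real.sqrt (R - (t - s) ^ 2) ^ (k + 1)) t := by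
    intro t ht
    have h0 := hpos t ht
    have hsq : Real.sqrt (R - (t - s) ^ 2) ≠ 0 :=
      ne_of_gt (Real.sqrt_pos.2 h0)
    have hinner : HasDerivAt (fun t : ℝ => R - (t - s) ^ 2) (-(2 * (t - s))) t := by
      have : HasDerivAt (fun t : ℝ => (t - s) ^ 2) (2 * (t - s)) t := by
        exact (((hasDerivAt_id t).sub_const s).pow 2).congr_deriv (by simp)
      simpa using (this.const_sub R)
    have hsqrt : HasDerivAt (fun t : ℝ => Real.sqrt (R - (t - s) ^ 2))
        (-(2 * (t - s)) / (2 * Real.sqrt (R - (t - s) ^ 2))) t := by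
      exact ((Real.hasDerivAt_sqrt (ne_of_gt h0)).comp t hinner).congr_deriv (by ring)
    have hpow := hsqrt.pow (k + 3)
    have := (hpow.div_const ((k : ℝ) + 3)).neg
    refine this.congr_deriv ?_
    have hc : ((k : ℝ) + 3) ≠ 0 := by positivity
    rw [show k + 3 - 1 = (k + 1) + 1 from rfl, pow_succ]
    push_cast
    field_simp
  have hInt : IntervalIntegrable (fun t : ℝ => (t - s) * Real.sqrt (R - (t - s) ^ 2) ^ (k + 1))
      volume a b := hcont.intervalIntegrable a b
  have hcontF : ContinuousOn F (Set.Icc a b) := by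
    have : Continuous F := by
      apply Continuous.neg
      apply Continuous.div_const
      exact (Real.continuous_sqrt.comp
        (continuous_const.sub ((continuous_id.sub continuous_const).pow 2))).pow (k + 3)
    exact this.continuousOn
  have := integral_eq_sub_of_hasDerivAt_of_le hab hcontF hderiv hInt
  rw [this, hF]
  push_cast
  ring

lemma key_integral (n : ℕ) :
    ∫ t in (1 - Real.sqrt 5 / 2)..(1 : ℝ),
      Real.sqrt (min (1 - t ^ 2) (5 / 4 - (1 - t) ^ 2)) ^ (n + 1) ≤
    64 / 15 * (Real.sqrt 55 / 8) ^ (n + 3) / (n + 3) := by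
  have h5 := Real.sq_sqrt (show (0:ℝ) ≤ 5 by norm_num)
  have h5n := Real.sqrt_nonneg 5
  have h5l : (2:ℝ) ≤ Real.sqrt 5 := by nlinarith
  have h5u : Real.sqrt 5 ≤ 9/4 := by nlinarith
  have ha : (1 - Real.sqrt 5 / 2 : ℝ) ≤ 3/8 := by linarith
  have hb : (3/8 : ℝ) ≤ 1 := by norm_num
  have hcontf : Continuous fun t : ℝ =>
      Real.sqrt (min (1 - t ^ 2) (5 / 4 - (1 - t) ^ 2)) ^ (n + 1) := by
    apply Continuous.pow
    apply Real.continuous_sqrt.comp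
    exact (continuous_const.sub (continuous_id.pow 2)).min
      (continuous_const.sub ((continuous_const.sub continuous_id).pow 2))
  have hcont1 : Continuous fun t : ℝ =>
      8/5 * (-((t - 1) * Real.sqrt (5/4 - (t - 1) ^ 2) ^ (n + 1))) := by
    apply Continuous.mul continuous_const
    apply Continuous.neg
    exact (continuous_id.sub continuous_const).mul
      ((Real.continuous_sqrt.comp
        (continuous_const.sub ((continuous_id.sub continuous_const).pow 2))).pow (n+1))
  have hcont2 : Continuous fun t : ℝ =>
      8/3 * ((t - 0) * Real.sqrt (1 - (t - 0) ^ 2) ^ (n + 1)) := by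
    apply Continuous.mul continuous_const
    exact (continuous_id.sub continuous_const).mul
      ((Real.continuous_sqrt.comp
        (continuous_const.sub ((continuous_id.sub continuous_const).pow 2))).pow (n+1))
  have hs55 : Real.sqrt (55/64) = Real.sqrt 55 / 8 := by
    rw [Real.sqrt_div (by norm_num : (0:ℝ) ≤ 55) 64,
      show (64:ℝ) = 8^2 by norm_num, Real.sqrt_sq (by norm_num : (0:ℝ) ≤ 8)]
  have hXn : (0:ℝ) ≤ Real.sqrt 55 / 8 := by positivity
  -- split the integral
  rw [← integral_add_adjacent_intervals (a := 1 - Real.sqrt 5 / 2) (b := 3/8) (c := 1)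
    (hcontf.intervalIntegrable _ _) (hcontf.intervalIntegrable _ _)]
  have hp1 : ∫ t in (1 - Real.sqrt 5 / 2)..(3/8 : ℝ),
      Real.sqrt (min (1 - t ^ 2) (5 / 4 - (1 - t) ^ 2)) ^ (n + 1) ≤
      8/5 * (Real.sqrt 55 / 8) ^ (n + 3) / (n + 3) := by
    have hmono : ∫ t in (1 - Real.sqrt 5 / 2)..(3/8 : ℝ),
        Real.sqrt (min (1 - t ^ 2) (5 / 4 - (1 - t) ^ 2)) ^ (n + 1) ≤
        ∫ t in (1 - Real.sqrt 5 / 2)..(3/8 : ℝ),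
        8/5 * (-((t - 1) * Real.sqrt (5/4 - (t - 1) ^ 2) ^ (n + 1))) := by
      apply integral_mono_on ha (hcontf.intervalIntegrable _ _) (hcont1.intervalIntegrable _ _)
      intro t ht
      obtain ⟨ht1, ht2⟩ := ht
      have hstep : Real.sqrt (min (1 - t ^ 2) (5 / 4 - (1 - t) ^ 2)) ≤
          Real.sqrt (5/4 - (t - 1) ^ 2) := by
        apply Real.sqrt_le_sqrt
        rw [show (t - 1)^2 = (1 - t)^2 by ring]
        exact min_le_right _ _
      have h1 : Real.sqrt (min (1 - t ^ 2) (5 / 4 - (1 - t) ^ 2)) ^ (n + 1) ≤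
          Real.sqrt (5/4 - (t - 1) ^ 2) ^ (n + 1) :=
        pow_le_pow_left₀ (Real.sqrt_nonneg _) hstep _
      have h2 : Real.sqrt (5/4 - (t - 1) ^ 2) ^ (n + 1) ≤
          (8/5 * (1 - t)) * Real.sqrt (5/4 - (t - 1) ^ 2) ^ (n + 1) := by
        apply le_mul_of_one_le_left (pow_nonneg (Real.sqrt_nonneg _) _)
        linarith
      calc Real.sqrt (min (1 - t ^ 2) (5 / 4 - (1 - t) ^ 2)) ^ (n + 1)
          ≤ (8/5 * (1 - t)) * Real.sqrt (5/4 - (t - 1) ^ 2) ^ (n + 1) := le_trans h1 h2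
        _ = 8/5 * (-((t - 1) * Real.sqrt (5/4 - (t - 1) ^ 2) ^ (n + 1))) := by ring
    refine hmono.trans ?_
    rw [intervalIntegral.integral_const_mul, intervalIntegral.integral_neg,
      ftc_aux n 1 (5/4) (1 - Real.sqrt 5 / 2) (3/8) ha
      (by intro t ht; obtain ⟨ht1, ht2⟩ := ht; nlinarith)]
    have e1 : (5:ℝ)/4 - ((1 - Real.sqrt 5 / 2) - 1)^2 = 0 := by linear_combination (-1/4 : ℝ) * h5
    have e2 : (5:ℝ)/4 - ((3:ℝ)/8 - 1)^2 = 55/64 := by norm_num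
    rw [e1, e2, hs55, Real.sqrt_zero, zero_pow (by omega)]
    rw [zero_sub, neg_div, neg_neg]
    rw [mul_div_assoc]
  have hp2 : ∫ t in (3/8 : ℝ)..(1:ℝ),
      Real.sqrt (min (1 - t ^ 2) (5 / 4 - (1 - t) ^ 2)) ^ (n + 1) ≤
      8/3 * (Real.sqrt 55 / 8) ^ (n + 3) / (n + 3) := by
    have hmono : ∫ t in (3/8 : ℝ)..(1:ℝ),
        Real.sqrt (min (1 - t ^ 2) (5 / 4 - (1 - t) ^ 2)) ^ (n + 1) ≤
        ∫ t in (3/8 : ℝ)..(1:ℝ),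
        8/3 * ((t - 0) * Real.sqrt (1 - (t - 0) ^ 2) ^ (n + 1)) := by
      apply integral_mono_on hb (hcontf.intervalIntegrable _ _) (hcont2.intervalIntegrable _ _)
      intro t ht
      obtain ⟨ht1, ht2⟩ := ht
      have hstep : Real.sqrt (min (1 - t ^ 2) (5 / 4 - (1 - t) ^ 2)) ≤
          Real.sqrt (1 - (t - 0) ^ 2) := by
        apply Real.sqrt_le_sqrt
        rw [show (t - 0)^2 = t^2 by ring]
        exact min_le_left _ _
      have h1 : Real.sqrt (min (1 - t ^ 2) (5 / 4 - (1 - t) ^ 2)) ^ (n + 1) ≤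
          Real.sqrt (1 - (t - 0) ^ 2) ^ (n + 1) :=
        pow_le_pow_left₀ (Real.sqrt_nonneg _) hstep _
      have h2 : Real.sqrt (1 - (t - 0) ^ 2) ^ (n + 1) ≤
          (8/3 * t) * Real.sqrt (1 - (t - 0) ^ 2) ^ (n + 1) := by
        apply le_mul_of_one_le_left (pow_nonneg (Real.sqrt_nonneg _) _)
        linarith
      calc Real.sqrt (min (1 - t ^ 2) (5 / 4 - (1 - t) ^ 2)) ^ (n + 1)
          ≤ (8/3 * t) * Real.sqrt (1 - (t - 0) ^ 2) ^ (n + 1) := le_trans h1 h2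
        _ = 8/3 * ((t - 0) * Real.sqrt (1 - (t - 0) ^ 2) ^ (n + 1)) := by ring
    refine hmono.trans ?_
    rw [intervalIntegral.integral_const_mul,
      ftc_aux n 0 1 (3/8) 1 hb (by intro t ht; obtain ⟨ht1, ht2⟩ := ht; nlinarith)]
    have e1 : (1:ℝ) - ((3:ℝ)/8 - 0)^2 = 55/64 := by norm_num
    have e2 : (1:ℝ) - ((1:ℝ) - 0)^2 = 0 := by norm_num
    rw [e1, e2, hs55, Real.sqrt_zero, zero_pow (by omega), sub_zero, mul_div_assoc]
  have hden : (0:ℝ) < (n:ℝ) + 3 := by positivity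
  have hXp : (0:ℝ) ≤ (Real.sqrt 55 / 8) ^ (n + 3) := by positivity
  calc _ ≤ 8/5 * (Real.sqrt 55 / 8) ^ (n + 3) / (n + 3) +
        8/3 * (Real.sqrt 55 / 8) ^ (n + 3) / (n + 3) := add_le_add hp1 hp2
    _ = 64 / 15 * (Real.sqrt 55 / 8) ^ (n + 3) / (n + 3) := by ring

lemma slice_volume (m : ℕ) {r : ℝ} (hr : 0 ≤ r) :
    volume {y : Fin (m + 1) → ℝ | ∑ i, y i ^ 2 ≤ r} =
      ENNReal.ofReal (Real.sqrt r ^ (m + 1)) *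
        volume (closedBall (0 : EuclideanSpace ℝ (Fin (m + 1))) 1) := by
  have hA : MeasurableSet {y : Fin (m + 1) → ℝ | ∑ i, y i ^ 2 ≤ r} := by
    apply measurableSet_le
    · exact (continuous_finset_sum _ fun i _ => (continuous_apply i).pow 2).measurable
    · exact measurable_const
  have hP := EuclideanSpace.volume_preserving_symm_measurableEquiv_toLp (Fin (m + 1))
  rw [← hP.measure_preimage hA.nullMeasurableSet]
  have hpre : (MeasurableEquiv.toLp 2 (Fin (m + 1) → ℝ)).symm ⁻¹'
      {y : Fin (m + 1) → ℝ | ∑ i, y i ^ 2 ≤ r} =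
      closedBall (0 : EuclideanSpace ℝ (Fin (m + 1))) (Real.sqrt r) := by
    ext x
    simp only [Set.mem_preimage, Set.mem_setOf_eq, mem_closedBall, dist_zero_right]
    rw [EuclideanSpace.norm_eq]
    have hco : ∀ i, ((MeasurableEquiv.toLp 2 (Fin (m + 1) → ℝ)).symm x) i = x i := fun _ => rfl
    simp only [hco, Real.norm_eq_abs, sq_abs]
    rw [Real.sqrt_le_sqrt_iff hr]
  rw [hpre, Measure.addHaar_closedBall' volume 0 (Real.sqrt_nonneg r),
    finrank_euclideanSpace_fin]

set_option maxHeartbeats 1000000 in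
/-- For Lebesgue measure restricted to the unit ball,
`ν_d(B(e₁, √5/2)) ≤ (16/(3(d+1))) (√55/8)^{d+1} λ^{d-1}(B^{d-1})`. -/
theorem restricted_ball_mass_bound (d : ℕ) (hd : 2 ≤ d) :
    let ν : Measure (EuclideanSpace ℝ (Fin d)) :=
      volume.restrict (closedBall (0 : EuclideanSpace ℝ (Fin d)) 1)
    ν (closedBall (EuclideanSpace.single (⟨0, by omega⟩ : Fin d) (1 : ℝ)) (Real.sqrt 5 / 2)) ≤
      ENNReal.ofReal (16 / (3 * (d + 1)) * (Real.sqrt 55 / 8) ^ (d + 1) *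
        (volume (closedBall (0 : EuclideanSpace ℝ (Fin (d - 1))) 1)).toReal) := by
  intro ν
  obtain ⟨n, rfl⟩ : ∃ n, d = n + 2 := ⟨d - 2, by omega⟩
  simp only [show n + 2 - 1 = n + 1 from rfl, show n + 2 + 1 = n + 3 from rfl]
  have h5 := Real.sq_sqrt (show (0:ℝ) ≤ 5 by norm_num)
  have h5n := Real.sqrt_nonneg 5
  have h5l : (2:ℝ) ≤ Real.sqrt 5 := by nlinarith
  have h5u : Real.sqrt 5 ≤ 9/4 := by nlinarith
  set a : ℝ := 1 - Real.sqrt 5 / 2 with hadef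
  have ha1 : a ≤ 1 := by rw [hadef]; linarith
  set g : ℝ → ℝ := fun t => min (1 - t ^ 2) (5/4 - (1 - t) ^ 2) with hgdef
  have hgc : Continuous g :=
    (continuous_const.sub (continuous_id.pow 2)).min
      (continuous_const.sub ((continuous_const.sub continuous_id).pow 2))
  have hg0 : ∀ t ∈ Set.Icc a 1, 0 ≤ g t := by
    intro t ht
    obtain ⟨ht1, ht2⟩ := ht
    rw [hadef] at ht1
    refine le_min (by nlinarith) (by nlinarith)
  set i0 : Fin (n + 2) := ⟨0, by omega⟩ with hi0
  set e₁ : EuclideanSpace ℝ (Fin (n + 2)) := EuclideanSpace.single i0 1 with he₁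
  set c : ℝ≥0∞ := volume (closedBall (0 : EuclideanSpace ℝ (Fin (n + 1))) 1) with hc
  have hcfin : c ≠ ⊤ := measure_closedBall_lt_top.ne
  set ψ := (MeasurableEquiv.toLp 2 (Fin (n + 2) → ℝ)).symm with hψdef
  set φ := MeasurableEquiv.piFinSuccAbove (fun _ : Fin (n + 2) => ℝ) i0 with hφdef
  have hΦ : MeasurePreserving (⇑φ ∘ ⇑ψ) volume volume :=
    (volume_preserving_piFinSuccAbove (fun _ : Fin (n + 2) => ℝ) i0).comp
      (EuclideanSpace.volume_preserving_symm_measurableEquiv_toLp (Fin (n + 2)))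
  set T : Set (ℝ × (Fin (n + 1) → ℝ)) :=
    {p | p.1 ∈ Set.Icc a 1} ∩ {p | ∑ i, p.2 i ^ 2 ≤ g p.1} with hTdef
  have hT : MeasurableSet T := by
    refine (measurableSet_Icc.preimage measurable_fst).inter ?_
    exact measurableSet_le
      (continuous_finset_sum _ fun i _ => ((continuous_apply i).comp continuous_snd).pow 2).measurable
      (hgc.comp continuous_fst).measurable
  -- step 1 : restrict
  have step1 : ν (closedBall e₁ (Real.sqrt 5 / 2)) =
      volume (closedBall e₁ (Real.sqrt 5 / 2) ∩ closedBall 0 1) := by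
    show volume.restrict (closedBall 0 1) _ = _
    rw [Measure.restrict_apply' measurableSet_closedBall]
  -- step 2 : subset
  have hsub : closedBall e₁ (Real.sqrt 5 / 2) ∩ closedBall 0 1 ⊆ (⇑φ ∘ ⇑ψ) ⁻¹' T := by
    rintro x ⟨hx1, hx2⟩
    rw [mem_closedBall, EuclideanSpace.dist_eq] at hx1
    rw [mem_closedBall, EuclideanSpace.dist_eq] at hx2
    have hsum1 : ∑ i, dist (x i) (e₁ i) ^ 2 ≤ 5/4 := by
      have hS0 : 0 ≤ ∑ i, dist (x i) (e₁ i) ^ 2 :=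
        Finset.sum_nonneg fun i _ => sq_nonneg _
      nlinarith [Real.sq_sqrt hS0, Real.sqrt_nonneg (∑ i, dist (x i) (e₁ i) ^ 2)]
    have hsum2 : ∑ i, dist (x i) ((0 : EuclideanSpace ℝ (Fin (n+2))) i) ^ 2 ≤ 1 := by
      have hS0 : 0 ≤ ∑ i, dist (x i) ((0 : EuclideanSpace ℝ (Fin (n+2))) i) ^ 2 :=
        Finset.sum_nonneg fun i _ => sq_nonneg _
      nlinarith [Real.sq_sqrt hS0,
        Real.sqrt_nonneg (∑ i, dist (x i) ((0 : EuclideanSpace ℝ (Fin (n+2))) i) ^ 2)]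
    rw [Fin.sum_univ_succAbove (fun i => dist (x i) (e₁ i) ^ 2) i0] at hsum1
    rw [Fin.sum_univ_succAbove
      (fun i => dist (x i) ((0 : EuclideanSpace ℝ (Fin (n+2))) i) ^ 2) i0] at hsum2
    have he₁0 : e₁ i0 = 1 := by
      rw [he₁, EuclideanSpace.single_apply, if_pos rfl]
    have he₁s : ∀ j : Fin (n+1), e₁ (i0.succAbove j) = 0 := fun j => by
      rw [he₁, EuclideanSpace.single_apply, if_neg (Fin.succAbove_ne i0 j)]
    simp only [he₁0, he₁s, Real.dist_eq, sub_zero] at hsum1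
    have hzero : ∀ i : Fin (n+2), (0 : EuclideanSpace ℝ (Fin (n+2))) i = 0 := fun _ => rfl
    simp only [hzero, Real.dist_eq, sub_zero] at hsum2
    simp only [sq_abs] at hsum1 hsum2
    have hSb : 0 ≤ ∑ j, x (i0.succAbove j) ^ 2 :=
      Finset.sum_nonneg fun i _ => sq_nonneg _
    -- membership
    show φ (ψ x) ∈ T
    have hφx : φ (ψ x) = (x i0, fun j => x (i0.succAbove j)) := rfl
    rw [hφx, hTdef]
    constructor
    · constructor
      · show a ≤ x i0
        rw [hadef]; nlinarith
      · show x i0 ≤ 1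
        nlinarith
    · show ∑ j, x (i0.succAbove j) ^ 2 ≤ g (x i0)
      refine le_min (by nlinarith) (by nlinarith)
  -- step 3 : compute volume T
  have hslice : ∀ t : ℝ, volume (Prod.mk t ⁻¹' T) =
      Set.indicator (Set.Icc a 1)
        (fun t => ENNReal.ofReal (Real.sqrt (g t) ^ (n + 1)) * c) t := by
    intro t
    by_cases ht : t ∈ Set.Icc a 1
    · rw [Set.indicator_of_mem ht]
      have hpre : Prod.mk t ⁻¹' T = {y : Fin (n + 1) → ℝ | ∑ i, y i ^ 2 ≤ g t} := by
        ext y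
        simp only [hTdef, Set.mem_preimage, Set.mem_inter_iff, Set.mem_setOf_eq]
        exact ⟨fun h => h.2, fun h => ⟨ht, h⟩⟩
      rw [hpre, slice_volume n (hg0 t ht), hc]
    · rw [Set.indicator_of_notMem ht]
      have hpre : Prod.mk t ⁻¹' T = ∅ := by
        ext y
        simp only [hTdef, Set.mem_preimage, Set.mem_inter_iff, Set.mem_setOf_eq,
          Set.mem_empty_iff_false, iff_false, not_and]
        exact fun h => absurd h ht
      rw [hpre, measure_empty]
  have hfm : Measurable fun t : ℝ => ENNReal.ofReal (Real.sqrt (g t) ^ (n + 1)) :=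
    ENNReal.measurable_ofReal.comp ((Real.continuous_sqrt.comp hgc).pow (n+1)).measurable
  have step3 : volume T = ENNReal.ofReal (∫ t in Set.Icc a 1, Real.sqrt (g t) ^ (n + 1)) * c := by
    rw [Measure.volume_eq_prod,
      Measure.prod_apply hT]
    rw [lintegral_congr hslice, lintegral_indicator measurableSet_Icc,
      lintegral_mul_const c hfm]
    have hint : IntegrableOn (fun t => Real.sqrt (g t) ^ (n + 1)) (Set.Icc a 1) := by
      apply Continuous.integrableOn_Icc
      exact (Real.continuous_sqrt.comp hgc).pow (n + 1)
    rw [← ofReal_integral_eq_lintegral_ofReal hint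
      (Filter.Eventually.of_forall fun t => pow_nonneg (Real.sqrt_nonneg _) _)]
  -- step 4 : real bound
  have hreal : ∫ t in Set.Icc a 1, Real.sqrt (g t) ^ (n + 1) ≤
      16 / (3 * ((n : ℝ) + 3)) * (Real.sqrt 55 / 8) ^ (n + 3) := by
    rw [MeasureTheory.integral_Icc_eq_integral_Ioc, ← intervalIntegral.integral_of_le ha1]
    refine (key_integral n).trans ?_
    have hX : (0:ℝ) ≤ (Real.sqrt 55 / 8) ^ (n + 3) := by positivity
    have hden : (0:ℝ) < (n : ℝ) + 3 := by positivity
    rw [show (16:ℝ) / (3 * ((n : ℝ) + 3)) * (Real.sqrt 55 / 8) ^ (n + 3)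
      = 16/3 * (Real.sqrt 55 / 8) ^ (n + 3) / ((n:ℝ) + 3) by field_simp]
    exact (div_le_div_iff_of_pos_right hden).mpr (by nlinarith)
  -- conclude
  rw [step1]
  calc volume (closedBall e₁ (Real.sqrt 5 / 2) ∩ closedBall 0 1)
      ≤ volume ((⇑φ ∘ ⇑ψ) ⁻¹' T) := measure_mono hsub
    _ = volume T := hΦ.measure_preimage hT.nullMeasurableSet
    _ = ENNReal.ofReal (∫ t in Set.Icc a 1, Real.sqrt (g t) ^ (n + 1)) * c := step3
    _ ≤ ENNReal.ofReal (16 / (3 * ((n : ℝ) + 3)) * (Real.sqrt 55 / 8) ^ (n + 3)) * c :=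
        mul_le_mul_left (ENNReal.ofReal_le_ofReal hreal) c
    _ = ENNReal.ofReal (16 / (3 * (((n + 2 : ℕ) : ℝ) + 1)) * (Real.sqrt 55 / 8) ^ (n + 3) *
        c.toReal) := by
        conv_rhs => rw [ENNReal.ofReal_mul (by positivity), ENNReal.ofReal_toReal hcfin]
        congr 2
        push_cast
        ring
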